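/- For any d ∈ ℕ with d ≥ 1, u with u^d ≠ 1 and u ≠ 0, 1, and all n ≥ 0: h_{n,λ}(x|u) = dⁿ · ((u⁻¹ - 1)/(1 - u^d)) · ∑_{a=0}^{d-1} u^{d-a} · h_{n,λ/d}((a+x)/d | u^d) (multiplication theorem / distribution relation). -/

import Mathlib

open PowerSeries Finset

noncomputable section

/-- Degenerate falling factorial `(x|λ)_n = x(x-λ)⋯(x-(n-1)λ)`. -/
def degFall {K : Type*} [Ring K] (l x : K) : ℕ → K
  | 0 => 1
  | n + 1 => degFall l x n * (x - (n : K) * l)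

/-- The formal power series `(1+λt)^{x/λ} := ∑_{m≥0} (x|λ)_m t^m/m!`. -/
def binExp {K : Type*} [Field K] (l x : K) : PowerSeries K :=
  PowerSeries.mk fun n => degFall l x n / (n.factorial : K)

/-- Degenerate Frobenius–Euler polynomials `h_{n,λ}(x|u)`, defined by
`(1-u)/((1+λt)^{1/λ} - u) · (1+λt)^{x/λ} = ∑ h_{n,λ}(x|u) tⁿ/n!`. -/
def dFE {K : Type*} [Field K] (l u x : K) (n : ℕ) : K :=
  (n.factorial : K) * PowerSeries.coeff (R := K) n
    ((PowerSeries.C (R := K) (1 - u)) * (binExp l 1 - PowerSeries.C (R := K) u)⁻¹ * binExp l x)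

/-- Degenerate Frobenius–Euler polynomials of order `r`. -/
def dFEr {K : Type*} [Field K] (r : ℕ) (l u x : K) (n : ℕ) : K :=
  (n.factorial : K) * PowerSeries.coeff (R := K) n
    (((PowerSeries.C (R := K) (1 - u)) * (binExp l 1 - PowerSeries.C (R := K) u)⁻¹) ^ r * binExp l x)

/-- The exponential series `e^{xt} = ∑ xⁿ tⁿ/n!`. -/
def expX {K : Type*} [Field K] (x : K) : PowerSeries K :=
  PowerSeries.mk fun n => x ^ n / (n.factorial : K)

/-- Higher-order Frobenius–Euler polynomials `H^{(r)}_n(x|u)`, defined by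
`((1-u)/(e^t-u))^r e^{xt} = ∑ H^{(r)}_n(x|u) tⁿ/n!`. -/
def FEr {K : Type*} [Field K] (r : ℕ) (u x : K) (n : ℕ) : K :=
  (n.factorial : K) * PowerSeries.coeff (R := K) n
    (((PowerSeries.C (R := K) (1 - u)) * (expX (1 : K) - PowerSeries.C (R := K) u)⁻¹) ^ r * expX x)

/-- Signed Stirling numbers of the first kind: `(x)_n = ∑ S₁(n,l) x^l`. -/
def S1 : ℕ → ℕ → ℤ
  | 0, 0 => 1
  | 0, _ + 1 => 0
  | n + 1, 0 => -(n : ℤ) * S1 n 0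
  | n + 1, k + 1 => S1 n k - (n : ℤ) * S1 n (k + 1)

/-- Stirling numbers of the second kind: `xⁿ = ∑ S₂(n,l) (x)_l`. -/
def S2 : ℕ → ℕ → ℤ
  | 0, 0 => 1
  | 0, _ + 1 => 0
  | _ + 1, 0 => 0
  | n + 1, k + 1 => S2 n k + ((k : ℤ) + 1) * S2 n (k + 1)

section AuxLemmas
variable {K : Type*} [Field K] [CharZero K]

lemma degFall_add (l x y : K) (n : ℕ) :
    degFall l (x + y) n =
      ∑ k ∈ range (n + 1), (n.choose k : K) * degFall l x k * degFall l y (n - k) := by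
  induction n with
  | zero => simp [degFall]
  | succ n ih =>
    have step : ∀ k ∈ range (n + 1),
        (n.choose k : K) * degFall l x k * degFall l y (n - k) * (x + y - (n : K) * l)
        = (n.choose k : K) * (degFall l x k * (x - (k : K) * l)) * degFall l y (n - k)
          + (n.choose k : K) * degFall l x k * (degFall l y (n - k) * (y - ((n - k : ℕ) : K) * l)) := by
      intro k hk
      have hk' : k ≤ n := Nat.lt_succ_iff.mp (mem_range.mp hk)
      have : ((n - k : ℕ) : K) = (n : K) - (k : K) := by
        rw [Nat.cast_sub hk']
      rw [this]; ring
    rw [show degFall l (x+y) (n+1) = degFall l (x+y) n * (x + y - (n:K)*l) from rfl, ih,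
      Finset.sum_mul, Finset.sum_congr rfl step, Finset.sum_add_distrib]
    have e1 : ∀ k ∈ range (n+1), (n.choose k : K) * (degFall l x k * (x - (k : K) * l)) * degFall l y (n - k)
        = (n.choose k : K) * degFall l x (k+1) * degFall l y (n - k) := by
      intro k _; rfl
    have e2 : ∀ k ∈ range (n+1), (n.choose k : K) * degFall l x k * (degFall l y (n - k) * (y - ((n - k : ℕ) : K) * l))
        = (n.choose k : K) * degFall l x k * degFall l y (n + 1 - k) := by
      intro k hk
      have hk' : k ≤ n := Nat.lt_succ_iff.mp (mem_range.mp hk)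
      have : n + 1 - k = (n - k) + 1 := by omega
      rw [this]; rfl
    rw [Finset.sum_congr rfl e1, Finset.sum_congr rfl e2]
    -- now show RHS over range (n+2) equals this
    rw [Finset.sum_range_succ' (fun k => ((n+1).choose k : K) * degFall l x k * degFall l y (n + 1 - k))]
    simp only [Nat.choose_succ_succ, Nat.cast_add, Nat.choose_zero_right]
    have split : ∀ k ∈ range (n+1),
        ((n.choose k : K) + (n.choose (k+1) : K)) * degFall l x (k+1) * degFall l y (n + 1 - (k+1))
        = (n.choose k : K) * degFall l x (k+1) * degFall l y (n - k)
          + (n.choose (k+1) : K) * degFall l x (k+1) * degFall l y (n - k) := by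
      intro k _
      have : n + 1 - (k+1) = n - k := by omega
      rw [this]; ring
    rw [Finset.sum_congr rfl split, Finset.sum_add_distrib]
    have last : ∑ k ∈ range (n+1), (n.choose (k+1) : K) * degFall l x (k+1) * degFall l y (n - k)
        + (1 : K) * degFall l x 0 * degFall l y (n + 1 - 0)
        = ∑ k ∈ range (n+1), (n.choose k : K) * degFall l x k * degFall l y (n + 1 - k) := by
      rw [Finset.sum_range_succ' (fun k => (n.choose k : K) * degFall l x k * degFall l y (n + 1 - k))]
      simp only [Nat.choose_zero_right, Nat.cast_one]
      congr 1
      rw [Finset.sum_range_succ]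
      simp only [Nat.choose_succ_self, Nat.cast_zero, zero_mul, add_zero]
      apply Finset.sum_congr rfl
      intro k hk
      have : n + 1 - (k+1) = n - k := by omega
      rw [this]
    rw [Nat.cast_one, add_assoc, last]

lemma binExp_mul (l x y : K) : binExp l x * binExp l y = binExp l (x + y) := by
  ext n
  rw [PowerSeries.coeff_mul, Finset.Nat.sum_antidiagonal_eq_sum_range_succ_mk]
  simp only [binExp, coeff_mk]
  rw [degFall_add, Finset.sum_div]
  apply Finset.sum_congr rfl
  intro k hk
  have hk' : k ≤ n := Nat.lt_succ_iff.mp (mem_range.mp hk)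
  rw [Nat.cast_choose K hk']
  have h1 : (k.factorial : K) ≠ 0 := Nat.cast_ne_zero.mpr k.factorial_ne_zero
  have h2 : ((n-k).factorial : K) ≠ 0 := Nat.cast_ne_zero.mpr (n-k).factorial_ne_zero
  have h3 : (n.factorial : K) ≠ 0 := Nat.cast_ne_zero.mpr n.factorial_ne_zero
  field_simp

lemma degFall_zero_succ (l : K) (n : ℕ) : degFall l 0 (n + 1) = 0 := by
  induction n with
  | zero => simp [degFall]
  | succ m ih =>
    show degFall l 0 (m+1) * _ = 0
    rw [ih, zero_mul]

lemma binExp_zero (l : K) : binExp l 0 = 1 := by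
  ext n
  simp only [binExp, coeff_mk, PowerSeries.coeff_one]
  cases n with
  | zero => simp [degFall]
  | succ m => simp [degFall_zero_succ]

lemma binExp_nat (l : K) (a : ℕ) : binExp l (a : K) = (binExp l 1) ^ a := by
  induction a with
  | zero => simpa using binExp_zero l
  | succ m ih => rw [pow_succ, ← ih, binExp_mul]; push_cast; ring_nf

lemma constantCoeff_binExp (l x : K) : constantCoeff (R := K) (binExp l x) = 1 := by
  have : constantCoeff (R := K) (binExp l x) = coeff (R := K) 0 (binExp l x) := by
    rw [PowerSeries.coeff_zero_eq_constantCoeff]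
  rw [this]
  simp [binExp, degFall]

lemma degFall_smul (c l x : K) (n : ℕ) :
    degFall (c * l) (c * x) n = c ^ n * degFall l x n := by
  induction n with
  | zero => simp [degFall]
  | succ m ih =>
    show degFall (c*l) (c*x) m * _ = _
    rw [ih, show degFall l x (m+1) = degFall l x m * (x - (m:K)*l) from rfl, pow_succ]
    ring

lemma rescale_binExp (c l x : K) (hc : c ≠ 0) :
    rescale c (binExp (l / c) x) = binExp l (c * x) := by
  ext n
  rw [coeff_rescale]
  simp only [binExp, coeff_mk]
  rw [mul_div_assoc', ← degFall_smul c (l/c) x n]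
  congr 3
  field_simp

lemma rescale_inv (c : K) (f : PowerSeries K) (hf : constantCoeff (R := K) f ≠ 0) :
    rescale c f⁻¹ = (rescale c f)⁻¹ := by
  have hcc : constantCoeff (R := K) (rescale c f) ≠ 0 := by
    have : constantCoeff (R := K) (rescale c f) = coeff (R := K) 0 (rescale c f) := by
      rw [PowerSeries.coeff_zero_eq_constantCoeff]
    rw [this, coeff_rescale]
    simpa [PowerSeries.coeff_zero_eq_constantCoeff] using hf
  rw [PowerSeries.eq_inv_iff_mul_eq_one hcc, ← map_mul,
    PowerSeries.inv_mul_cancel f hf, map_one]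

lemma rescale_C' (c a : K) : rescale c (C (R := K) a) = C (R := K) a := by
  ext n
  rw [coeff_rescale, PowerSeries.coeff_C]
  split_ifs with h
  · subst h; simp
  · simp


end AuxLemmas

theorem stmt5 {K : Type*} [Field K] [CharZero K] (l u x : K) (d : ℕ) (hd : 1 ≤ d)
    (hud : u ^ d ≠ 1) (hu0 : u ≠ 0) (hu1 : u ≠ 1) (n : ℕ) :
    dFE l u x n =
      (d : K) ^ n * ((u⁻¹ - 1) / (1 - u ^ d)) *
        ∑ a ∈ Finset.range d, u ^ (d - a) * dFE (l / d) (u ^ d) (((a : K) + x) / d) n := by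
  set q := binExp l 1 with hq
  have hdK : (d : K) ≠ 0 := Nat.cast_ne_zero.mpr (by omega)
  have h1u : (1 : K) - u ≠ 0 := sub_ne_zero.mpr (Ne.symm hu1)
  have h1d : (1 : K) - u ^ d ≠ 0 := sub_ne_zero.mpr (Ne.symm hud)
  -- geometric factorization
  set S : PowerSeries K := ∑ i ∈ range d, q ^ i * (C (R := K) u) ^ (d - 1 - i) with hS
  have key1 : S * (q - C (R := K) u) = q ^ d - C (R := K) (u ^ d) := by
    rw [hS, geom_sum₂_mul, map_pow]
  have hcq : constantCoeff (R := K) (q - C (R := K) u) ≠ 0 := by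
    rw [map_sub, constantCoeff_binExp, PowerSeries.constantCoeff_C]
    exact h1u
  have hcqd : constantCoeff (R := K) (q ^ d - C (R := K) (u ^ d)) ≠ 0 := by
    rw [map_sub, map_pow, constantCoeff_binExp, PowerSeries.constantCoeff_C, one_pow]
    exact h1d
  have hcS : constantCoeff (R := K) S ≠ 0 := by
    intro h
    apply hcqd
    rw [← key1, map_mul, h, zero_mul]
  have key2 : (q ^ d - C (R := K) (u ^ d))⁻¹ * (S * binExp l x) = (q - C (R := K) u)⁻¹ * binExp l x := by
    rw [← key1, PowerSeries.mul_inv_rev, mul_assoc, ← mul_assoc S⁻¹ S,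
      PowerSeries.inv_mul_cancel S hcS, one_mul]
  have hconst2 : constantCoeff (R := K) (binExp (l / d) 1 - C (R := K) (u ^ d)) ≠ 0 := by
    rw [map_sub, constantCoeff_binExp, PowerSeries.constantCoeff_C]
    exact h1d
  have hterm : ∀ a : ℕ, a ∈ range d → (d : K) ^ n * dFE (l / d) (u ^ d) (((a : K) + x) / d) n
      = (n.factorial : K) * (coeff (R := K) n) (C (R := K) (1 - u ^ d) *
          ((q ^ d - C (R := K) (u ^ d))⁻¹ * (q ^ a * binExp l x))) := by
    intro a _
    unfold dFE
    rw [mul_left_comm, ← coeff_rescale]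
    have hres : rescale (d : K) ((C (R := K) (1 - u ^ d)) * (binExp (l / d) 1 - C (R := K) (u ^ d))⁻¹ *
          binExp (l / d) (((a : K) + x) / d))
        = C (R := K) (1 - u ^ d) * ((q ^ d - C (R := K) (u ^ d))⁻¹ * (q ^ a * binExp l x)) := by
      rw [map_mul (rescale (d : K)), map_mul (rescale (d : K)), rescale_C',
        rescale_inv _ _ hconst2, map_sub (rescale (d : K)), rescale_C',
        rescale_binExp _ _ _ hdK, rescale_binExp _ _ _ hdK, mul_one,
        show (d : K) * (((a : K) + x) / d) = (a : K) + x by field_simp,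
        show binExp l (d : K) = q ^ d from binExp_nat l d,
        ← binExp_mul, show binExp l (a : K) = q ^ a from binExp_nat l a]
      ring
    rw [hres]
  have hscal : ∀ a : ℕ, a ∈ range d →
      (u⁻¹ - 1) / (1 - u ^ d) * u ^ (d - a) * (1 - u ^ d) = (1 - u) * u ^ (d - 1 - a) := by
    intro a ha
    have hlt : a < d := mem_range.mp ha
    have : d - a = (d - 1 - a) + 1 := by omega
    rw [this, pow_succ]
    field_simp
  have main : (∑ a ∈ range d, C (R := K) ((1 - u) * u ^ (d - 1 - a)) *
        ((q ^ d - C (R := K) (u ^ d))⁻¹ * (q ^ a * binExp l x)))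
      = C (R := K) (1 - u) * (q - C (R := K) u)⁻¹ * binExp l x := by
    have : (∑ a ∈ range d, C (R := K) ((1 - u) * u ^ (d - 1 - a)) *
          ((q ^ d - C (R := K) (u ^ d))⁻¹ * (q ^ a * binExp l x)))
        = C (R := K) (1 - u) * ((q ^ d - C (R := K) (u ^ d))⁻¹ * (S * binExp l x)) := by
      rw [hS, Finset.sum_mul, Finset.mul_sum, Finset.mul_sum]
      apply Finset.sum_congr rfl
      intro a _
      rw [map_mul, map_pow]
      ring
    rw [this, key2]
    ring
  calc dFE l u x n
      = (n.factorial : K) * (coeff (R := K) n) (C (R := K) (1 - u) * (q - C (R := K) u)⁻¹ * binExp l x) := rfl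
    _ = (n.factorial : K) * (coeff (R := K) n) (∑ a ∈ range d, C (R := K) ((1 - u) * u ^ (d - 1 - a)) *
          ((q ^ d - C (R := K) (u ^ d))⁻¹ * (q ^ a * binExp l x))) := by rw [main]
    _ = ∑ a ∈ range d, (n.factorial : K) * (coeff (R := K) n) (C (R := K) ((1 - u) * u ^ (d - 1 - a)) *
          ((q ^ d - C (R := K) (u ^ d))⁻¹ * (q ^ a * binExp l x))) := by
        rw [map_sum, Finset.mul_sum]
    _ = (d : K) ^ n * ((u⁻¹ - 1) / (1 - u ^ d)) *
        ∑ a ∈ Finset.range d, u ^ (d - a) * dFE (l / d) (u ^ d) (((a : K) + x) / d) n := by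
        rw [Finset.mul_sum]
        apply Finset.sum_congr rfl
        intro a ha
        rw [show (d : K) ^ n * ((u⁻¹ - 1) / (1 - u ^ d)) *
              (u ^ (d - a) * dFE (l / d) (u ^ d) (((a : K) + x) / d) n)
            = (u⁻¹ - 1) / (1 - u ^ d) * u ^ (d - a) *
              ((d : K) ^ n * dFE (l / d) (u ^ d) (((a : K) + x) / d) n) by ring,
          hterm a ha, coeff_C_mul, coeff_C_mul, ← hscal a ha]
        ring
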